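/- Let N ≥ 1, κ ≥ 0, let φ : SO(3)×SO(3) → [0,∞) be symmetric (φ(R,Q) = φ(Q,R)), and let (R_i, a_i)_{i=1,…,N} be a differentiable solution of the Cucker–Smale system on SO(3) on an open interval I such that for all t ∈ I and all i,k, either d(R_i(t),R_k(t)) < π or φ(R_i(t),R_k(t)) = 0. Then for all t ∈ I: d/dt Σ_{i=1}^{N} ‖a_i(t)‖² = −(κ/N) Σ_{i,k=1}^{N} φ(R_i(t),R_k(t)) ‖(1 − cos(θ_{ki}/2))(n_{ki}·a_k) n_{ki} + sin(θ_{ki}/2)(a_k × n_{ki}) + cos(θ_{ki}/2) a_k − a_i‖² ≤ 0; in particular the kinetic energy E(t) := Σ_{i=1}^{N} ‖a_i(t)‖² is non-increasing on I. -/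

import Mathlib

open Matrix Real

noncomputable section

/-- `ℝ³` with the Euclidean norm. -/
abbrev E3 := EuclideanSpace ℝ (Fin 3)

/-- Hat map: the skew-symmetric matrix associated to a vector `x ∈ ℝ³`,
with rows `(0, −x₃, x₂)`, `(x₃, 0, −x₁)`, `(−x₂, x₁, 0)`. -/
def hat (x : E3) : Matrix (Fin 3) (Fin 3) ℝ :=
  !![0, -x 2, x 1; x 2, 0, -x 0; -x 1, x 0, 0]

/-- Standard basis vectors `e_α` of `ℝ³`. -/
def e (α : Fin 3) : E3 := EuclideanSpace.single α 1

attribute [local instance] Matrix.normedAddCommGroup Matrix.normedSpace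

/-- `SO(3)`: real 3×3 matrices with `RᵀR = I` and `det R = 1`. -/
def SO3 : Set (Matrix (Fin 3) (Fin 3) ℝ) := {R | Rᵀ * R = 1 ∧ R.det = 1}

/-- Geodesic distance on SO(3): `d(R,Q) = arccos((tr(RᵀQ) − 1)/2)`. -/
def so3dist (R Q : Matrix (Fin 3) (Fin 3) ℝ) : ℝ :=
  Real.arccos (((Rᵀ * Q).trace - 1) / 2)

/-- Vee map: the inverse of the hat map on skew-symmetric matrices. -/
def vee (A : Matrix (Fin 3) (Fin 3) ℝ) : E3 := WithLp.toLp 2 ![A 2 1, A 0 2, A 1 0]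

/-- Cross product on `ℝ³`. -/
def cross3 (x y : E3) : E3 := WithLp.toLp 2 (crossProduct x y)

/-- The unit vector `n_{ki}` with `n̂_{ki} = (1/(2 sin θ_{ki}))(R_kᵀR_i − R_iᵀR_k)`
(where `θ_{ki} = d(R_i,R_k)`), set to `0` when `sin θ_{ki} = 0`. -/
def nki (Rk Ri : Matrix (Fin 3) (Fin 3) ℝ) : E3 :=
  if Real.sin (so3dist Ri Rk) = 0 then 0
  else (1 / (2 * Real.sin (so3dist Ri Rk))) • vee (Rkᵀ * Ri - Riᵀ * Rk)

/-- The Cucker–Smale interaction term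
`(1−cos(θ_{ki}/2))(n_{ki}·a_k)n_{ki} + sin(θ_{ki}/2)(a_k × n_{ki}) + cos(θ_{ki}/2)a_k − a_i`,
i.e. `P_{ki}a_k − a_i` in vector form. -/
def csForce (Ri Rk : Matrix (Fin 3) (Fin 3) ℝ) (ak ai : E3) : E3 :=
  (1 - Real.cos (so3dist Ri Rk / 2)) • ((inner ℝ (nki Rk Ri) ak : ℝ) • nki Rk Ri)
    + Real.sin (so3dist Ri Rk / 2) • cross3 ak (nki Rk Ri)
    + Real.cos (so3dist Ri Rk / 2) • ak - ai

/-- The Cucker–Smale system on SO(3) on a time set `I`: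
`Ṙ_i = R_i â_i` and
`ȧ_i = (κ/N) Σ_k φ(R_i,R_k)[(1−cos(θ_{ki}/2))(n_{ki}·a_k)n_{ki} + sin(θ_{ki}/2)(a_k×n_{ki}) + cos(θ_{ki}/2)a_k − a_i]`. -/
structure IsCSSol (N : ℕ) (κ : ℝ)
    (φ : Matrix (Fin 3) (Fin 3) ℝ → Matrix (Fin 3) (Fin 3) ℝ → ℝ) (I : Set ℝ)
    (R : Fin N → ℝ → Matrix (Fin 3) (Fin 3) ℝ) (a : Fin N → ℝ → E3) : Prop where
  memSO3 : ∀ i, ∀ t ∈ I, R i t ∈ SO3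
  hR : ∀ i, ∀ t ∈ I, HasDerivAt (R i) (R i t * hat (a i t)) t
  ha : ∀ i, ∀ t ∈ I, HasDerivAt (a i)
    ((κ / N) • ∑ k, φ (R i t) (R k t) • csForce (R i t) (R k t) (a k t) (a i t)) t

namespace Stmt16Aux

lemma adj_eq {Q : Matrix (Fin 3) (Fin 3) ℝ} (hQ : Q ∈ SO3) : Q.adjugate = Qᵀ := by
  obtain ⟨h1, h2⟩ := hQ
  have h3 : Q * Q.adjugate = 1 := by rw [Matrix.mul_adjugate, h2, one_smul]
  calc Q.adjugate = (Qᵀ * Q) * Q.adjugate := by rw [h1, one_mul]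
    _ = Qᵀ * (Q * Q.adjugate) := by rw [Matrix.mul_assoc]
    _ = Qᵀ := by rw [h3, mul_one]

lemma vee_sq {Q : Matrix (Fin 3) (Fin 3) ℝ} (hQ : Q ∈ SO3) :
    (Qᵀ - Q) 2 1 ^ 2 + (Qᵀ - Q) 0 2 ^ 2 + (Qᵀ - Q) 1 0 ^ 2 = 4 - (Q.trace - 1) ^ 2 := by
  obtain ⟨h1, h2⟩ := hQ
  have hA := adj_eq ⟨h1, h2⟩
  rw [Matrix.adjugate_fin_three] at hA
  have c00 := congrFun (congrFun hA 0) 0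
  have c11 := congrFun (congrFun hA 1) 1
  have c22 := congrFun (congrFun hA 2) 2
  have e00 := congrFun (congrFun h1 0) 0
  have e11 := congrFun (congrFun h1 1) 1
  have e22 := congrFun (congrFun h1 2) 2
  simp [Matrix.mul_apply, Fin.sum_univ_three, Matrix.one_apply, Matrix.transpose_apply,
    Matrix.cons_val_zero, Matrix.cons_val_one, Matrix.head_cons] at c00 c11 c22 e00 e11 e22
  simp only [Matrix.sub_apply, Matrix.transpose_apply, Matrix.trace_fin_three]
  linear_combination e00 + e11 + e22 + 2 * c00 + 2 * c11 + 2 * c22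



lemma SO3_mul {Ri Rk : Matrix (Fin 3) (Fin 3) ℝ} (hRi : Ri ∈ SO3) (hRk : Rk ∈ SO3) :
    Riᵀ * Rk ∈ SO3 := by
  obtain ⟨h1, h2⟩ := hRi
  obtain ⟨h3, h4⟩ := hRk
  have h5 : Ri * Riᵀ = 1 := mul_eq_one_comm.mp h1
  refine ⟨?_, ?_⟩
  · rw [Matrix.transpose_mul, Matrix.transpose_transpose, Matrix.mul_assoc,
      ← Matrix.mul_assoc Ri Riᵀ Rk, h5, Matrix.one_mul, h3]
  · rw [Matrix.det_mul, Matrix.det_transpose, h2, h4, mul_one]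

lemma nki_sq {Ri Rk : Matrix (Fin 3) (Fin 3) ℝ} (hRi : Ri ∈ SO3) (hRk : Rk ∈ SO3)
    (hs : Real.sin (so3dist Ri Rk) ≠ 0) :
    nki Rk Ri 0 ^ 2 + nki Rk Ri 1 ^ 2 + nki Rk Ri 2 ^ 2 = 1 := by
  set Q := Riᵀ * Rk with hQdef
  have hQ : Q ∈ SO3 := SO3_mul hRi hRk
  have hM : Rkᵀ * Ri - Riᵀ * Rk = Qᵀ - Q := by
    rw [hQdef, Matrix.transpose_mul, Matrix.transpose_transpose]
  have hv := vee_sq hQ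
  have hd : so3dist Ri Rk = Real.arccos ((Q.trace - 1) / 2) := rfl
  set x := (Q.trace - 1) / 2 with hx
  have hx4 : (Q.trace - 1) ^ 2 = 4 * x ^ 2 := by rw [hx]; ring
  have hnn : 0 ≤ 4 - (Q.trace - 1) ^ 2 := by rw [← hv]; positivity
  have h1x : 0 ≤ 1 - x ^ 2 := by nlinarith
  have hsin2 : Real.sin (so3dist Ri Rk) ^ 2 = 1 - x ^ 2 := by
    rw [hd, Real.sin_arccos, Real.sq_sqrt h1x]
  have hn : ∀ j, nki Rk Ri j = (1 / (2 * Real.sin (so3dist Ri Rk))) * (Qᵀ - Q) (![2,0,1] j) (![1,2,0] j) := by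
    intro j
    rw [nki, if_neg hs, hM]
    fin_cases j <;>
      simp [vee, PiLp.smul_apply, smul_eq_mul, Matrix.cons_val_zero, Matrix.cons_val_one,
        Matrix.head_cons]
  rw [hn 0, hn 1, hn 2]
  simp only [Matrix.cons_val_zero, Matrix.cons_val_one, Matrix.head_cons, Matrix.cons_val_two,
    Matrix.tail_cons]
  have h2 : Real.sin (so3dist Ri Rk) ^ 2 ≠ 0 := pow_ne_zero _ hs
  simp only [Matrix.sub_apply, Matrix.transpose_apply] at hv ⊢
  field_simp
  linear_combination hv - hx4 - 4 * hsin2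

/-- The rotation part of the Cucker–Smale force. -/
def Pmap (Ri Rk : Matrix (Fin 3) (Fin 3) ℝ) (x : E3) : E3 :=
  (1 - Real.cos (so3dist Ri Rk / 2)) • ((inner ℝ (nki Rk Ri) x : ℝ) • nki Rk Ri)
    + Real.sin (so3dist Ri Rk / 2) • cross3 x (nki Rk Ri)
    + Real.cos (so3dist Ri Rk / 2) • x

lemma csForce_eq (Ri Rk : Matrix (Fin 3) (Fin 3) ℝ) (ak ai : E3) :
    csForce Ri Rk ak ai = Pmap Ri Rk ak - ai := rfl

lemma Pmap_inner_self {Ri Rk : Matrix (Fin 3) (Fin 3) ℝ} (hRi : Ri ∈ SO3) (hRk : Rk ∈ SO3)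
    (hθ : so3dist Ri Rk < π) (x : E3) :
    (inner ℝ (Pmap Ri Rk x) (Pmap Ri Rk x) : ℝ) = (inner ℝ x x : ℝ) := by
  by_cases hs : Real.sin (so3dist Ri Rk) = 0
  · have h0 : so3dist Ri Rk = 0 := by
      have h1 : 0 ≤ so3dist Ri Rk := Real.arccos_nonneg _
      have := (Real.sin_eq_zero_iff_of_lt_of_lt (by linarith [Real.pi_pos]) hθ).mp hs
      exact this
    have hn : nki Rk Ri = 0 := by rw [nki, if_pos hs]
    simp [Pmap, hn, h0, cross3]
  · have hn := nki_sq hRi hRk hs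
    have hsc : Real.sin (so3dist Ri Rk / 2) ^ 2 + Real.cos (so3dist Ri Rk / 2) ^ 2 = 1 :=
      Real.sin_sq_add_cos_sq _
    set θ := so3dist Ri Rk with hθdef
    set n := nki Rk Ri with hndef
    set s := Real.sin (θ / 2) with hsdef
    set c := Real.cos (θ / 2) with hcdef
    simp only [Pmap, cross3, cross_apply, PiLp.inner_apply, RCLike.inner_apply, conj_trivial,
      Fin.sum_univ_three, PiLp.add_apply, PiLp.smul_apply, smul_eq_mul, ← hndef,
      Matrix.cons_val_zero, Matrix.cons_val_one, Matrix.head_cons, Matrix.cons_val_two,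
      Matrix.tail_cons]
    linear_combination (x 0 ^ 2 + x 1 ^ 2 + x 2 ^ 2 - (n 0 * x 0 + n 1 * x 1 + n 2 * x 2) ^ 2) * hsc
      + ((1 - c) ^ 2 * (n 0 * x 0 + n 1 * x 1 + n 2 * x 2) ^ 2 + s ^ 2 * (x 0 ^ 2 + x 1 ^ 2 + x 2 ^ 2)) * hn

lemma pair_identity {Ri Rk : Matrix (Fin 3) (Fin 3) ℝ} (hRi : Ri ∈ SO3) (hRk : Rk ∈ SO3)
    {φv : ℝ} (hcut : so3dist Ri Rk < π ∨ φv = 0) (ak ai : E3) :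
    φv * (2 * (inner ℝ ai (csForce Ri Rk ak ai) : ℝ)) =
      -(φv * ‖csForce Ri Rk ak ai‖ ^ 2) + φv * (‖ak‖ ^ 2 - ‖ai‖ ^ 2) := by
  rcases hcut with hθ | h0
  · have hP := Pmap_inner_self hRi hRk hθ ak
    have hF : ‖csForce Ri Rk ak ai‖ ^ 2 =
        (inner ℝ ak ak : ℝ) - 2 * (inner ℝ ai (Pmap Ri Rk ak) : ℝ) + (inner ℝ ai ai : ℝ) := by
      rw [← real_inner_self_eq_norm_sq, csForce_eq, inner_sub_left, inner_sub_right,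
        inner_sub_right, hP, real_inner_comm (Pmap Ri Rk ak) ai]
      ring
    have hI : (inner ℝ ai (csForce Ri Rk ak ai) : ℝ) =
        (inner ℝ ai (Pmap Ri Rk ak) : ℝ) - (inner ℝ ai ai : ℝ) := by
      rw [csForce_eq, inner_sub_right]
    rw [hF, hI, ← real_inner_self_eq_norm_sq ak, ← real_inner_self_eq_norm_sq ai]
    ring
  · simp [h0]

end Stmt16Aux

/-- energy dissipation for the Cucker–Smale model on SO(3):
`d/dt Σᵢ‖aᵢ‖² = −(κ/N) Σ_{i,k} φ(Rᵢ,R_k)‖P_{ki}a_k − aᵢ‖² ≤ 0`,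
and the kinetic energy is non-increasing. -/
theorem stmt16 (N : ℕ) (hN : 1 ≤ N) (κ : ℝ) (hκ : 0 ≤ κ)
    (φ : Matrix (Fin 3) (Fin 3) ℝ → Matrix (Fin 3) (Fin 3) ℝ → ℝ)
    (hφ0 : ∀ R Q, 0 ≤ φ R Q) (hφsym : ∀ R Q, φ R Q = φ Q R)
    (t₀ t₁ : ℝ)
    (R : Fin N → ℝ → Matrix (Fin 3) (Fin 3) ℝ) (a : Fin N → ℝ → E3)
    (hsol : IsCSSol N κ φ (Set.Ioo t₀ t₁) R a)
    (hcut : ∀ t ∈ Set.Ioo t₀ t₁, ∀ i k,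
      so3dist (R i t) (R k t) < π ∨ φ (R i t) (R k t) = 0) :
    (∀ t ∈ Set.Ioo t₀ t₁,
      HasDerivAt (fun s => ∑ i, ‖a i s‖ ^ 2)
        (-(κ / N) * ∑ i, ∑ k, φ (R i t) (R k t) *
            ‖csForce (R i t) (R k t) (a k t) (a i t)‖ ^ 2) t ∧
      -(κ / N) * ∑ i, ∑ k, φ (R i t) (R k t) *
          ‖csForce (R i t) (R k t) (a k t) (a i t)‖ ^ 2 ≤ 0) ∧
    AntitoneOn (fun t => ∑ i, ‖a i t‖ ^ 2) (Set.Ioo t₀ t₁) := by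
  have hNpos : (0:ℝ) < (N:ℝ) := by exact_mod_cast Nat.lt_of_lt_of_le Nat.zero_lt_one hN
  have hκN : 0 ≤ κ / (N:ℝ) := div_nonneg hκ hNpos.le
  have key : ∀ t ∈ Set.Ioo t₀ t₁,
      HasDerivAt (fun s => ∑ i, ‖a i s‖ ^ 2)
        (-(κ / N) * ∑ i, ∑ k, φ (R i t) (R k t) *
            ‖csForce (R i t) (R k t) (a k t) (a i t)‖ ^ 2) t := by
    intro t ht
    have hA : ∀ i : Fin N, HasDerivAt (fun s => ‖a i s‖ ^ 2)
        ((κ / N) * ∑ k, φ (R i t) (R k t) *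
          (2 * (inner ℝ (a i t) (csForce (R i t) (R k t) (a k t) (a i t)) : ℝ))) t := by
      intro i
      have h1 := HasDerivAt.inner ℝ (hsol.ha i t ht) (hsol.ha i t ht)
      have h2 : (fun s => ‖a i s‖ ^ 2) = (fun s => (inner ℝ (a i s) (a i s) : ℝ)) :=
        funext fun s => (real_inner_self_eq_norm_sq _).symm
      rw [h2]
      refine h1.congr_deriv (Eq.symm ?_)
      rw [real_inner_smul_right, real_inner_smul_left, inner_sum, sum_inner,
        Finset.mul_sum, Finset.mul_sum, Finset.mul_sum, ← Finset.sum_add_distrib]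
      refine Finset.sum_congr rfl fun k _ => ?_
      rw [real_inner_smul_right, real_inner_smul_left,
        real_inner_comm (csForce (R i t) (R k t) (a k t) (a i t)) (a i t)]
      ring
    have hsum := HasDerivAt.fun_sum (fun i (_ : i ∈ Finset.univ) => hA i)
    have heq : ∑ i : Fin N, (κ / (N:ℝ)) * ∑ k, φ (R i t) (R k t) *
          (2 * (inner ℝ (a i t) (csForce (R i t) (R k t) (a k t) (a i t)) : ℝ)) =
        -(κ / N) * ∑ i, ∑ k, φ (R i t) (R k t) *
            ‖csForce (R i t) (R k t) (a k t) (a i t)‖ ^ 2 := by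
      have hpair : ∀ i k : Fin N, φ (R i t) (R k t) *
            (2 * (inner ℝ (a i t) (csForce (R i t) (R k t) (a k t) (a i t)) : ℝ)) =
          -(φ (R i t) (R k t) * ‖csForce (R i t) (R k t) (a k t) (a i t)‖ ^ 2) +
            φ (R i t) (R k t) * (‖a k t‖ ^ 2 - ‖a i t‖ ^ 2) :=
        fun i k => Stmt16Aux.pair_identity (hsol.memSO3 i t ht) (hsol.memSO3 k t ht)
          (hcut t ht i k) (a k t) (a i t)
      have hzero : ∑ i : Fin N, ∑ k, φ (R i t) (R k t) * (‖a k t‖ ^ 2 - ‖a i t‖ ^ 2) = 0 := by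
        have hneg : ∑ i : Fin N, ∑ k, φ (R i t) (R k t) * (‖a k t‖ ^ 2 - ‖a i t‖ ^ 2) =
            -∑ i : Fin N, ∑ k, φ (R i t) (R k t) * (‖a k t‖ ^ 2 - ‖a i t‖ ^ 2) := by
          conv_lhs => rw [Finset.sum_comm]
          rw [← Finset.sum_neg_distrib]
          refine Finset.sum_congr rfl fun i _ => ?_
          rw [← Finset.sum_neg_distrib]
          refine Finset.sum_congr rfl fun k _ => ?_
          rw [hφsym (R k t) (R i t)]
          ring
        linarith
      simp_rw [hpair]
      rw [← Finset.mul_sum]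
      simp only [Finset.sum_add_distrib, Finset.sum_neg_distrib, hzero, add_zero]
      ring
    exact heq ▸ hsum
  refine ⟨fun t ht => ⟨key t ht, ?_⟩, ?_⟩
  · have hpos : 0 ≤ ∑ i, ∑ k, φ (R i t) (R k t) *
        ‖csForce (R i t) (R k t) (a k t) (a i t)‖ ^ 2 :=
      Finset.sum_nonneg fun i _ => Finset.sum_nonneg fun k _ =>
        mul_nonneg (hφ0 _ _) (by positivity)
    have := mul_nonneg hκN hpos
    linarith
  · refine antitoneOn_of_deriv_nonpos (convex_Ioo t₀ t₁) ?_ ?_ ?_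
    · exact fun t ht => (key t ht).continuousAt.continuousWithinAt
    · rw [interior_Ioo]
      exact fun t ht => (key t ht).differentiableAt.differentiableWithinAt
    · rw [interior_Ioo]
      intro x hx
      rw [(key x hx).deriv]
      have hpos : 0 ≤ ∑ i, ∑ k, φ (R i x) (R k x) *
          ‖csForce (R i x) (R k x) (a k x) (a i x)‖ ^ 2 :=
        Finset.sum_nonneg fun i _ => Finset.sum_nonneg fun k _ =>
          mul_nonneg (hφ0 _ _) (by positivity)
      have := mul_nonneg hκN hpos
      linarith
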